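/- For integers m ≥ 1 and 0 ≤ z ≤ m, the sum ∑_{k=0}^{z-1} ln(1 - k/m) differs from z·∫₀¹ ln(1 - x·z/m) dx by at most 1 + (ln m)/2, where terms with k = m are interpreted via the convention that the k = m-1 error term equals 1. -/

import Mathlib

open Real Finset MeasureTheory

noncomputable def gg (m n : ℕ) : ℝ := -((m:ℝ) - n) * Real.log (1 - (n:ℝ)/m) - n

lemma log_int01 : IntervalIntegrable Real.log volume 0 1 := by
  apply IntervalIntegrable.mono_fun' (g := fun x : ℝ => 2 * x ^ (-(1/2) : ℝ))
  · exact (intervalIntegral.intervalIntegrable_rpow' (by norm_num)).const_mul 2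
  · exact Real.measurable_log.aestronglyMeasurable
  · rw [Set.uIoc_of_le (zero_le_one (α := ℝ))]
    filter_upwards [MeasureTheory.ae_restrict_mem measurableSet_Ioc] with x hx
    have hx0 : (0:ℝ) < x := hx.1
    have hlog : Real.log x ≤ 0 := Real.log_nonpos hx0.le hx.2
    have hs : Real.log (x ^ (-(1/2):ℝ)) = (-(1/2)) * Real.log x := Real.log_rpow hx0 _
    have hsp : (0:ℝ) < x ^ (-(1/2):ℝ) := Real.rpow_pos_of_pos hx0 _
    have h2 := Real.log_le_sub_one_of_pos hsp
    have : -Real.log x ≤ 2 * x ^ (-(1/2):ℝ) := by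
      rw [hs] at h2; linarith
    simpa [Real.norm_eq_abs, abs_of_nonpos hlog] using this

lemma integral_log_01 : ∫ x in (0:ℝ)..1, Real.log x = -1 := by
  have h := intervalIntegral.integral_eq_sub_of_hasDeriv_right_of_le
    (f := fun x : ℝ => x * Real.log x - x) (f' := Real.log) zero_le_one
    ((Real.continuous_mul_log.sub continuous_id).continuousOn)
    (fun x hx => by
      have h1 : HasDerivAt (fun x : ℝ => x * Real.log x - x) (Real.log x) x := by
        have h2 := (Real.hasDerivAt_mul_log (ne_of_gt hx.1)).sub (hasDerivAt_id' x)
        simp only [add_sub_cancel_right] at h2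
        exact h2
      exact h1.hasDerivWithinAt)
    log_int01
  simpa using h

lemma intA (m z : ℕ) (hm : 1 ≤ m) (hz : z ≤ m) :
    (z:ℝ) * ∫ x in (0:ℝ)..1, Real.log (1 - x * z / m) = gg m z := by
  have hm0 : (m:ℝ) ≠ 0 := Nat.cast_ne_zero.mpr (by omega)
  rcases Nat.eq_zero_or_pos z with rfl | hz1
  · simp [gg]
  rcases eq_or_lt_of_le hz with rfl | hzm
  · have e : ∀ x : ℝ, 1 - x * z / z = 1 - x := by intro x; field_simp
    simp_rw [e]
    rw [intervalIntegral.integral_comp_sub_left Real.log 1]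
    norm_num [integral_log_01, gg]
  · have hz0 : (z:ℝ) ≠ 0 := Nat.cast_ne_zero.mpr (by omega)
    have hc : (-(z/m) : ℝ) ≠ 0 := by
      simp only [ne_eq, neg_eq_zero, div_eq_zero_iff]
      push_neg; exact ⟨hz0, hm0⟩
    have e : ∀ x : ℝ, 1 - x * z / m = (-(z/m)) * x + 1 := by intro x; ring
    simp_rw [e]
    rw [intervalIntegral.integral_comp_mul_add Real.log hc 1]
    have hb : (0:ℝ) < 1 - z/m := by
      have : (z:ℝ) < m := by exact_mod_cast hzm
      have hmpos : (0:ℝ) < m := by positivity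
      rw [sub_pos, div_lt_one hmpos]; exact this
    have : (-(z/m)) * 0 + 1 = (1:ℝ) := by ring
    rw [this]
    have : (-(z/m)) * 1 + 1 = (1 - z/m : ℝ) := by ring
    rw [this, integral_log]
    simp only [smul_eq_mul, gg, Real.log_one]
    field_simp
    ring

lemma keyK (c : ℝ) (hc : 2 ≤ c) : 1 ≤ (c - 1/2) * (Real.log c - Real.log (c-1)) := by
  have h0 : (0:ℝ) < c - 1 := by linarith
  have hμ : (0:ℝ) < c - 1/2 := by linarith
  have hinv : Real.log c - Real.log (c-1) = ∫ t in (c-1)..c, t⁻¹ := by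
    rw [integral_inv (by
      rw [Set.uIcc_of_le (by linarith)]
      intro h
      exact absurd h.1 (by push_neg; linarith))]
    rw [Real.log_div (by linarith) (by linarith)]
  have hlin : ∫ t in (c-1)..c, (2*(c-1/2) - t)/(c-1/2)^2 = 1/(c-1/2) := by
    have e : ∀ t:ℝ, (2*(c-1/2) - t)/(c-1/2)^2
        = (2*(c-1/2))/(c-1/2)^2 - t * (1/(c-1/2)^2) := by intro t; ring
    simp_rw [e]
    rw [intervalIntegral.integral_sub (intervalIntegrable_const)
      ((by fun_prop : Continuous fun t : ℝ => t * (1/(c-1/2)^2)).intervalIntegrable _ _),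
      intervalIntegral.integral_const, intervalIntegral.integral_mul_const,
      integral_id, smul_eq_mul]
    have hne : (c - 1/2) ≠ 0 := ne_of_gt hμ
    rw [show c - (c-1) = (1:ℝ) by ring, show c^2-(c-1)^2 = 2*(c-1/2) by ring, one_mul]
    have key : ∀ μ:ℝ, μ ≠ 0 → 2*μ/μ^2 - 2*μ/2 * (1/μ^2) = 1/μ := by
      intro μ h; field_simp; ring
    exact key _ hne
  have hmono : ∫ t in (c-1)..c, (2*(c-1/2) - t)/(c-1/2)^2 ≤ ∫ t in (c-1)..c, t⁻¹ := by
    apply intervalIntegral.integral_mono_on (by linarith)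
    · exact ((continuous_const.sub continuous_id).div_const _).intervalIntegrable _ _
    · apply intervalIntegral.intervalIntegrable_inv ?_ continuousOn_id
      intro x hx
      rw [Set.uIcc_of_le (by linarith)] at hx
      have : 0 < x := lt_of_lt_of_le h0 hx.1
      simp only [id]
      positivity
    · intro t ht
      have ht0 : 0 < t := lt_of_lt_of_le h0 ht.1
      rw [inv_eq_one_div, div_le_div_iff₀ (by positivity) ht0]
      nlinarith [sq_nonneg (c - 1/2 - t)]
  calc (1:ℝ) = (c - 1/2) * (1/(c-1/2)) := by rw [mul_one_div, div_self (ne_of_gt hμ)]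
  _ ≤ (c - 1/2) * (Real.log c - Real.log (c-1)) := by
      rw [hinv, ← hlin]
      exact mul_le_mul_of_nonneg_left hmono hμ.le

lemma gg_eq (m n : ℕ) (hm : 1 ≤ m) (hn : n ≤ m) :
    gg m n = -((m:ℝ) - n) * (Real.log ((m:ℝ) - n) - Real.log m) - n := by
  have hm0 : (0:ℝ) < m := by positivity
  rcases eq_or_lt_of_le hn with rfl | h
  · rw [gg, sub_self, neg_zero, zero_mul, zero_mul]
  · have hC : (0:ℝ) < (m:ℝ) - n := by
      have : (n:ℝ) < m := by exact_mod_cast h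
      linarith
    rw [gg, show (1 : ℝ) - (n:ℝ)/m = ((m:ℝ) - n)/m by field_simp,
      Real.log_div (ne_of_gt hC) (ne_of_gt hm0)]

lemma diff_eq (m n : ℕ) (hm : 1 ≤ m) (h : n + 1 ≤ m) :
    gg m (n+1) - gg m n
      = (((m:ℝ)-n) - 1) * (Real.log ((m:ℝ)-n) - Real.log (((m:ℝ)-n) - 1)) - 1
        + (Real.log ((m:ℝ)-n) - Real.log m) := by
  rw [gg_eq m (n+1) hm h, gg_eq m n hm (by omega)]
  push_cast
  rw [show (m:ℝ) - ((n:ℝ)+1) = ((m:ℝ) - n) - 1 by ring]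
  ring

lemma log_term_eq (m n : ℕ) (hm : 1 ≤ m) (h : n + 1 ≤ m) :
    Real.log (1 - (n:ℝ)/m) = Real.log ((m:ℝ) - n) - Real.log m := by
  have hm0 : (0:ℝ) < m := by positivity
  have hC : (0:ℝ) < (m:ℝ) - n := by
    have : (n:ℝ) < m := by exact_mod_cast h
    linarith
  rw [show (1 : ℝ) - (n:ℝ)/m = ((m:ℝ) - n)/m by field_simp,
    Real.log_div (ne_of_gt hC) (ne_of_gt hm0)]

lemma lowerB (m : ℕ) (hm : 1 ≤ m) :
    ∀ z, z ≤ m → gg m z ≤ ∑ k ∈ range z, Real.log (1 - (k:ℝ)/m) := by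
  intro z
  induction z with
  | zero => simp [gg]
  | succ n ih =>
    intro hz
    have ihn := ih (by omega)
    rw [sum_range_succ, log_term_eq m n hm hz]
    have hd := diff_eq m n hm hz
    have hC1 : (1:ℝ) ≤ (m:ℝ) - n := by
      have : ((n:ℝ)+1) ≤ m := by exact_mod_cast hz
      linarith
    have key : (((m:ℝ)-n) - 1) * (Real.log ((m:ℝ)-n) - Real.log (((m:ℝ)-n) - 1)) ≤ 1 := by
      rcases eq_or_lt_of_le hC1 with h1 | h1
      · rw [show ((m:ℝ)-n) - 1 = 0 by rw [← h1]; ring, zero_mul]; norm_num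
      · have h2 : (2:ℝ) ≤ (m:ℝ) - n := by
          have hne : n + 2 ≤ m := by
            by_contra hc
            have : n + 1 = m := by omega
            rw [← this] at h1; push_cast at h1; linarith
          have := (Nat.cast_le (α := ℝ)).mpr hne
          push_cast at this; linarith
        have hl : Real.log ((m:ℝ)-n) - Real.log (((m:ℝ)-n)-1) ≤ 1/(((m:ℝ)-n)-1) := by
          rw [← Real.log_div (by linarith) (by linarith)]
          have hh := Real.log_le_sub_one_of_pos
            (x := ((m:ℝ)-n)/(((m:ℝ)-n)-1)) (div_pos (by linarith) (by linarith))
          calc Real.log (((m:ℝ)-n)/(((m:ℝ)-n)-1)) ≤ ((m:ℝ)-n)/(((m:ℝ)-n)-1) - 1 := hh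
          _ = 1/(((m:ℝ)-n)-1) := by
              rw [div_sub_one (by linarith : ((m:ℝ)-n)-1 ≠ 0)]
              rw [show ((m:ℝ)-n) - (((m:ℝ)-n)-1) = 1 by ring]
        calc (((m:ℝ)-n) - 1) * (Real.log ((m:ℝ)-n) - Real.log (((m:ℝ)-n) - 1))
            ≤ (((m:ℝ)-n) - 1) * (1/(((m:ℝ)-n)-1)) :=
              mul_le_mul_of_nonneg_left hl (by linarith)
        _ = 1 := by rw [mul_one_div, div_self (by linarith)]
    linarith

lemma upperC (m : ℕ) (hm : 1 ≤ m) :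
    ∀ z, z + 1 ≤ m →
      ∑ k ∈ range z, Real.log (1 - (k:ℝ)/m)
        ≤ gg m z + (Real.log m - Real.log ((m:ℝ) - z))/2 := by
  intro z
  induction z with
  | zero => simp [gg]
  | succ n ih =>
    intro hz
    have ihn := ih (by omega)
    rw [sum_range_succ, log_term_eq m n hm (by omega)]
    have hd := diff_eq m n hm (by omega)
    have h2 : (2:ℝ) ≤ (m:ℝ) - n := by
      have : ((n:ℝ)+2) ≤ m := by exact_mod_cast hz
      linarith
    have key := keyK ((m:ℝ)-n) h2
    have e2 : (m:ℝ) - ((n+1:ℕ):ℝ) = ((m:ℝ) - n) - 1 := by push_cast; ring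
    rw [e2]
    linarith

/-- For integers `m ≥ 1` and `0 ≤ z ≤ m`, the sum `∑_{k=0}^{z-1} ln(1 - k/m)` differs
from `z·∫₀¹ ln(1 - x·z/m) dx` by at most `1 + (ln m)/2`. -/
theorem stmt_11 (m z : ℕ) (hm : 1 ≤ m) (hz : z ≤ m) :
    |(∑ k ∈ Finset.range z, Real.log (1 - (k : ℝ) / m)) -
        z * ∫ x in (0:ℝ)..1, Real.log (1 - x * z / m)| ≤ 1 + Real.log m / 2 := by
  rw [intA m z hm hz]
  have hlog : (0:ℝ) ≤ Real.log m := Real.log_nonneg (by exact_mod_cast hm)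
  have hlow := lowerB m hm z hz
  rw [abs_le]
  refine ⟨by linarith, ?_⟩
  rcases eq_or_lt_of_le hz with rfl | hlt
  · -- z = m
    obtain ⟨n, rfl⟩ : ∃ n, z = n + 1 := ⟨z - 1, by omega⟩
    rw [sum_range_succ, log_term_eq (n+1) n (by omega) (by omega)]
    have hup := upperC (n+1) (by omega) n (by omega)
    have e1 : ((n+1:ℕ):ℝ) - (n:ℝ) = 1 := by push_cast; ring
    rw [e1, Real.log_one] at hup ⊢
    have eg1 : gg (n+1) n = Real.log ((n+1:ℕ):ℝ) - n := by
      rw [gg_eq (n+1) n (by omega) (by omega), e1, Real.log_one]; ring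
    have eg2 : gg (n+1) (n+1) = -(((n+1:ℕ):ℝ)) := by
      rw [gg_eq (n+1) (n+1) (by omega) le_rfl, sub_self, neg_zero, zero_mul]; ring
    rw [eg2] at *
    linarith
  · -- z < m
    have hup := upperC m hm z (by omega)
    have hC1 : (1:ℝ) ≤ (m:ℝ) - z := by
      have : ((z:ℝ)+1) ≤ m := by exact_mod_cast hlt
      linarith
    have : (0:ℝ) ≤ Real.log ((m:ℝ) - z) := Real.log_nonneg hC1
    linarith
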